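/- In the deductive systems Sm⁼∀ (m ∈ {3,4,5}), for any formulas φ, ψ the formula (φ ≡ ψ) → □(φ ≡ ψ) is derivable; i.e., propositional identity statements are necessary. -/
import Mathlib


/-- Formulas of the language of S3⁼∀/S4⁼∀/S5⁼∀ (with constants ⊥, ⊤),
with propositional connectives, identity ≡, necessity □ and a universal
propositional quantifier. -/
inductive Fm : Type
  | var : Nat → Fm
  | bot : Fm
  | top : Fm
  | neg : Fm → Fm
  | imp : Fm → Fm → Fm
  | conj : Fm → Fm → Fm
  | disj : Fm → Fm → Fm
  | iden : Fm → Fm → Fm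
  | box : Fm → Fm
  | all : Nat → Fm → Fm
deriving DecidableEq

namespace Fm

/-- Free variables of a formula. -/
def fv : Fm → Finset Nat
  | var n => {n}
  | bot => ∅
  | top => ∅
  | neg φ => fv φ
  | imp φ ψ => fv φ ∪ fv ψ
  | conj φ ψ => fv φ ∪ fv ψ
  | disj φ ψ => fv φ ∪ fv ψ
  | iden φ ψ => fv φ ∪ fv ψ
  | box φ => fv φ
  | all x φ => fv φ \ {x}

/-- The variable forced by the substitution σ w.r.t. ∀xφ: the least variable
greater than all free variables of the formulas σ(u), u free in ∀xφ. -/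
def forced (σ : Nat → Fm) (x : Nat) (φ : Fm) : Nat :=
  (fv (all x φ)).sup (fun u => (fv (σ u)).sup (· + 1))

/-- Capture-avoiding substitution; the bound variable of a quantified formula
is renamed to the forced variable. -/
def subst (σ : Nat → Fm) : Fm → Fm
  | var n => σ n
  | bot => bot
  | top => top
  | neg φ => neg (subst σ φ)
  | imp φ ψ => imp (subst σ φ) (subst σ ψ)
  | conj φ ψ => conj (subst σ φ) (subst σ ψ)
  | disj φ ψ => disj (subst σ φ) (subst σ ψ)
  | iden φ ψ => iden (subst σ φ) (subst σ ψ)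
  | box φ => box (subst σ φ)
  | all x φ =>
      let y := forced σ x φ
      all y (subst (Function.update σ x (var y)) φ)

/-- Substitution of a single variable: φ[x := ψ]. -/
def subst1 (x : Nat) (ψ : Fm) (φ : Fm) : Fm :=
  subst (Function.update var x ψ) φ

/-- Alpha-congruence: φ =α ψ iff φ[ε] = ψ[ε], where ε is the identity
substitution (Lemma 1 of the paper). -/
def AlphaEq (φ ψ : Fm) : Prop := subst var φ = subst var ψ

/-- Boolean evaluation treating variables, constants aside, boxed, identity
and quantified formulas as atoms. -/
def evalP (v : Fm → Bool) : Fm → Bool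
  | bot => false
  | top => true
  | neg φ => !evalP v φ
  | imp φ ψ => !evalP v φ || evalP v ψ
  | conj φ ψ => evalP v φ && evalP v ψ
  | disj φ ψ => evalP v φ || evalP v ψ
  | φ => v φ

/-- Substitution-instances of propositional tautologies. -/
def Taut (φ : Fm) : Prop := ∀ v : Fm → Bool, evalP v φ = true

/-- The axiom set 𝔸𝕏 of S3⁼∀ extended by the extra schemes `E`
(E = ∅ for S3⁼∀, the 4-scheme for S4⁼∀, the 4- and 5-schemes for S5⁼∀),
closed under universal generalization of axioms. -/
inductive Ax (E : Fm → Prop) : Fm → Prop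
  | extra {φ} : E φ → Ax E φ
  | taut {φ} : Taut φ → Ax E φ
  | t (φ) : Ax E (imp (box φ) φ)
  | k (φ ψ) : Ax E (imp (box (imp φ ψ)) (imp (box φ) (box ψ)))
  | s3 (φ ψ) : Ax E (imp (box (imp φ ψ)) (box (imp (box φ) (box ψ))))
  | alpha {φ ψ} : AlphaEq φ ψ → Ax E (iden φ ψ)
  | idImp (φ ψ) : Ax E (imp (iden φ ψ) (imp φ ψ))
  | idSubst {x χ} (ψ ψ') : x ∈ fv χ →
      Ax E (imp (iden ψ ψ') (iden (subst1 x ψ χ) (subst1 x ψ' χ)))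
  | idAll {x φ ψ} : x ∈ fv φ → x ∈ fv ψ →
      Ax E (imp (all x (iden φ ψ)) (iden (all x φ) (all x ψ)))
  | inst {x φ} (ψ) : x ∈ fv φ → Ax E (imp (all x φ) (subst1 x ψ φ))
  | allK {x φ ψ} : x ∈ fv φ → x ∈ fv ψ →
      Ax E (imp (all x (imp φ ψ)) (imp (all x φ) (all x ψ)))
  | allConst {x φ ψ} : x ∉ fv φ → x ∈ fv ψ →
      Ax E (imp (all x (imp φ ψ)) (imp φ (all x ψ)))
  | cbf {x φ} : x ∈ fv φ → Ax E (imp (box (all x φ)) (all x (box φ)))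
  | barcan {x φ} : x ∈ fv φ → Ax E (imp (all x (box φ)) (box (all x φ)))
  | gen {x φ} : Ax E φ → x ∈ fv φ → Ax E (all x φ)

/-- Extra axiom schemes: none for S3⁼∀. -/
def E3 : Fm → Prop := fun _ => False

/-- Extra axiom schemes for S4⁼∀: □φ → □□φ. -/
def E4 : Fm → Prop := fun χ => ∃ φ, χ = imp (box φ) (box (box φ))

/-- Extra axiom schemes for S5⁼∀: the 4-scheme and ¬□φ → □¬□φ. -/
def E5 : Fm → Prop := fun χ =>
  E4 χ ∨ ∃ φ, χ = imp (neg (box φ)) (box (neg (box φ)))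

/-- Derivability from a premise set Φ: premises, axioms, Axiom Necessitation
(□φ only for axioms φ) and Modus Ponens. -/
inductive Deriv (E : Fm → Prop) (Φ : Set Fm) : Fm → Prop
  | prem {φ} : φ ∈ Φ → Deriv E Φ φ
  | ax {φ} : Ax E φ → Deriv E Φ φ
  | an {φ} : Ax E φ → Deriv E Φ (box φ)
  | mp {φ ψ} : Deriv E Φ (imp φ ψ) → Deriv E Φ φ → Deriv E Φ ψ

end Fm
namespace Fm

lemma mem_forced_lt {σ : Nat → Fm} {x : Nat} {φ : Fm} {u m : Nat}
    (hu : u ∈ fv (all x φ)) (hm : m ∈ fv (σ u)) : m < forced σ x φ := by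
  have h1 : (fv (σ u)).sup (· + 1) ≤ forced σ x φ :=
    Finset.le_sup (f := fun u => (fv (σ u)).sup (· + 1)) hu
  have h2 : m + 1 ≤ (fv (σ u)).sup (· + 1) := Finset.le_sup (f := (· + 1)) hm
  omega

lemma subst_congr : ∀ (φ : Fm) {σ τ : Nat → Fm},
    (∀ u ∈ fv φ, σ u = τ u) → subst σ φ = subst τ φ := by
  intro φ
  induction φ with
  | var n => intro σ τ h; exact h n (by simp [fv])
  | bot => intros; rfl
  | top => intros; rfl
  | neg φ ih => intro σ τ h; simp only [subst]; rw [ih h]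
  | box φ ih => intro σ τ h; simp only [subst]; rw [ih h]
  | imp φ ψ ih1 ih2 =>
      intro σ τ h; simp only [subst]
      rw [ih1 (fun u hu => h u (by simp [fv, hu])),
          ih2 (fun u hu => h u (by simp [fv, hu]))]
  | conj φ ψ ih1 ih2 =>
      intro σ τ h; simp only [subst]
      rw [ih1 (fun u hu => h u (by simp [fv, hu])),
          ih2 (fun u hu => h u (by simp [fv, hu]))]
  | disj φ ψ ih1 ih2 =>
      intro σ τ h; simp only [subst]
      rw [ih1 (fun u hu => h u (by simp [fv, hu])),
          ih2 (fun u hu => h u (by simp [fv, hu]))]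
  | iden φ ψ ih1 ih2 =>
      intro σ τ h; simp only [subst]
      rw [ih1 (fun u hu => h u (by simp [fv, hu])),
          ih2 (fun u hu => h u (by simp [fv, hu]))]
  | all x φ ih =>
      intro σ τ h
      have hf : forced σ x φ = forced τ x φ := by
        unfold forced
        exact Finset.sup_congr rfl (fun u hu => by rw [h u hu])
      simp only [subst]
      rw [hf]
      refine congrArg (all _) (ih ?_)
      intro u hu
      by_cases hux : u = x
      · subst hux; simp
      · rw [Function.update_of_ne hux, Function.update_of_ne hux]
        exact h u (by simp [fv, hu, hux])

lemma fv_subst : ∀ (φ : Fm) (σ : Nat → Fm),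
    fv (subst σ φ) = (fv φ).biUnion (fun u => fv (σ u)) := by
  intro φ
  induction φ with
  | var n => intro σ; simp [subst, fv]
  | bot => intro σ; simp [subst, fv]
  | top => intro σ; simp [subst, fv]
  | neg φ ih => intro σ; simp only [subst, fv]; rw [ih]
  | box φ ih => intro σ; simp only [subst, fv]; rw [ih]
  | imp φ ψ ih1 ih2 =>
      intro σ; simp only [subst, fv]; rw [ih1, ih2]; ext m; simp only [Finset.mem_biUnion, Finset.mem_union]; aesop
  | conj φ ψ ih1 ih2 =>
      intro σ; simp only [subst, fv]; rw [ih1, ih2]; ext m; simp only [Finset.mem_biUnion, Finset.mem_union]; aesop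
  | disj φ ψ ih1 ih2 =>
      intro σ; simp only [subst, fv]; rw [ih1, ih2]; ext m; simp only [Finset.mem_biUnion, Finset.mem_union]; aesop
  | iden φ ψ ih1 ih2 =>
      intro σ; simp only [subst, fv]; rw [ih1, ih2]; ext m; simp only [Finset.mem_biUnion, Finset.mem_union]; aesop
  | all x φ ih =>
      intro σ
      show fv (subst σ (all x φ)) = _
      simp only [subst]
      set y := forced σ x φ with hy
      show fv (subst (Function.update σ x (var y)) φ) \ {y} = _
      rw [ih]
      ext m
      simp only [Finset.mem_sdiff, Finset.mem_biUnion, Finset.mem_singleton, fv]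
      constructor
      · rintro ⟨⟨u, hu, hmu⟩, hmy⟩
        by_cases hux : u = x
        · subst hux
          rw [Function.update_self] at hmu
          simp [fv] at hmu
          exact absurd hmu hmy
        · rw [Function.update_of_ne hux] at hmu
          exact ⟨u, ⟨hu, hux⟩, hmu⟩
      · rintro ⟨u, ⟨hu, hux⟩, hmu⟩
        have hlt : m < y := mem_forced_lt (φ := φ) (u := u) (by simp [fv, hu, hux]) hmu
        refine ⟨⟨u, hu, ?_⟩, by omega⟩
        rw [Function.update_of_ne hux]; exact hmu

lemma subst_subst_var : ∀ (φ : Fm) (σ : Nat → Fm), (∀ u, ∃ n, σ u = var n) →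
    subst var (subst σ φ) = subst σ φ := by
  intro φ
  induction φ with
  | var n =>
      intro σ h
      obtain ⟨m, hm⟩ := h n
      simp [subst, hm]
  | bot => intros; rfl
  | top => intros; rfl
  | neg φ ih => intro σ h; simp only [subst]; rw [ih _ h]
  | box φ ih => intro σ h; simp only [subst]; rw [ih _ h]
  | imp φ ψ ih1 ih2 => intro σ h; simp only [subst]; rw [ih1 _ h, ih2 _ h]
  | conj φ ψ ih1 ih2 => intro σ h; simp only [subst]; rw [ih1 _ h, ih2 _ h]
  | disj φ ψ ih1 ih2 => intro σ h; simp only [subst]; rw [ih1 _ h, ih2 _ h]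
  | iden φ ψ ih1 ih2 => intro σ h; simp only [subst]; rw [ih1 _ h, ih2 _ h]
  | all x φ ih =>
      intro σ h
      show subst var (subst σ (all x φ)) = subst σ (all x φ)
      simp only [subst]
      set y := forced σ x φ with hy
      set σ' := Function.update σ x (var y) with hσ'
      set ρ := subst σ' φ with hρ
      have hσ'v : ∀ u, ∃ n, σ' u = var n := by
        intro u
        by_cases hux : u = x
        · subst hux; exact ⟨y, by simp [hσ']⟩
        · rw [hσ', Function.update_of_ne hux]; exact h u
      have hfv : fv ρ \ {y} = (fv φ \ {x}).biUnion (fun u => fv (σ u)) := by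
        have h2 := fv_subst (all x φ) σ
        show fv (all y ρ) = _
        rw [show all y ρ = subst σ (all x φ) from rfl, h2]
        rfl
      have hz : forced var y ρ = y := by
        show (fv (all y ρ)).sup (fun u => (fv (var u)).sup (· + 1)) = y
        have e1 : (fun u => (fv (var u)).sup (· + 1)) = fun u : Nat => u + 1 := by
          funext u; simp [fv]
        rw [show fv (all y ρ) = fv ρ \ {y} from rfl, hfv, e1, Finset.sup_biUnion]
        rfl
      rw [hz]
      have hup : Function.update var y (var y) = var := Function.update_eq_self y var
      rw [hup, ih _ hσ'v]

end Fm
namespace Fm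

lemma evalP_imp (v : Fm → Bool) (a b : Fm) :
    evalP v (imp a b) = (!evalP v a || evalP v b) := rfl

lemma taut_trans (a b c : Fm) :
    Taut (imp (imp a b) (imp (imp b c) (imp a c))) := by
  intro v
  simp only [evalP_imp]
  cases evalP v a <;> cases evalP v b <;> cases evalP v c <;> rfl

lemma taut_mp (p a q : Fm) :
    Taut (imp p (imp (imp a (imp p q)) (imp a q))) := by
  intro v
  simp only [evalP_imp]
  cases evalP v p <;> cases evalP v a <;> cases evalP v q <;> rfl

lemma Deriv.trans {E : Fm → Prop} {Φ : Set Fm} {a b c : Fm}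
    (h1 : Deriv E Φ (imp a b)) (h2 : Deriv E Φ (imp b c)) :
    Deriv E Φ (imp a c) :=
  ((Deriv.ax (Ax.taut (taut_trans a b c))).mp h1).mp h2

lemma subst1_box (θ : Fm) : subst1 0 θ (box (var 0)) = box θ := by
  simp [subst1, subst]

/-- Replacement in the context □x, as a derivation step. -/
lemma box_repl {E : Fm → Prop} {Φ : Set Fm} {a b : Fm}
    (h : Deriv E Φ (iden a b)) : Deriv E Φ (imp (box a) (box b)) := by
  have h1 : Ax E (imp (iden a b) (iden (subst1 0 a (box (var 0))) (subst1 0 b (box (var 0))))) :=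
    Ax.idSubst a b (by simp [fv])
  rw [subst1_box, subst1_box] at h1
  have h2 : Deriv E Φ (iden (box a) (box b)) := (Deriv.ax h1).mp h
  exact (Deriv.ax (Ax.idImp _ _)).mp h2

lemma main_thm (E : Fm → Prop) (φ ψ : Fm) :
    Deriv E ∅ (imp (iden φ ψ) (box (iden φ ψ))) := by
  classical
  set φh := subst var φ with hφh
  have hφhn : subst var φh = φh := subst_subst_var φ var (fun u => ⟨u, rfl⟩)
  have hfvφh : fv φh = fv φ := by
    rw [hφh, fv_subst]
    exact Finset.biUnion_singleton_eq_self
  set x := (fv φ).sup (· + 1) with hx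
  have hxfree : x ∉ fv φh := by
    rw [hfvφh]
    intro h
    have h2 := Finset.le_sup (f := (· + 1)) h
    rw [← hx] at h2
    simp at h2
  -- computation of the substitution into the context (φh ≡ x)
  have hsub1 : ∀ θ : Fm, subst1 x θ (iden φh (var x)) = iden φh θ := by
    intro θ
    show iden (subst (Function.update var x θ) φh) (Function.update var x θ x) = _
    rw [Function.update_self]
    congr 1
    calc subst (Function.update var x θ) φh
        = subst var φh := subst_congr φh (fun u hu => by
          rw [Function.update_of_ne]; rintro rfl; exact hxfree hu)
      _ = φh := hφhn
  -- T1 : (φ ≡ ψ) → ((φh ≡ φ) ≡ (φh ≡ ψ))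
  have T1 : Deriv E ∅ (imp (iden φ ψ) (iden (iden φh φ) (iden φh ψ))) := by
    have h := Ax.idSubst (E := E) (x := x) (χ := iden φh (var x)) φ ψ (by simp [fv])
    rw [hsub1, hsub1] at h
    exact Deriv.ax h
  -- T2 : ((φh ≡ φ) ≡ (φh ≡ ψ)) → (□(φh ≡ φ) → □(φh ≡ ψ))
  have T2 : Deriv E ∅ (imp (iden (iden φh φ) (iden φh ψ))
      (imp (box (iden φh φ)) (box (iden φh ψ)))) := by
    have h1 : Ax E (imp (iden (iden φh φ) (iden φh ψ))
        (iden (subst1 0 (iden φh φ) (box (var 0))) (subst1 0 (iden φh ψ) (box (var 0))))) :=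
      Ax.idSubst _ _ (by simp [fv])
    rw [subst1_box, subst1_box] at h1
    exact (Deriv.ax h1).trans (Deriv.ax (Ax.idImp _ _))
  -- T4 : □(φh ≡ φ)
  have halpha : AlphaEq φh φ := hφhn
  have T4 : Deriv E ∅ (box (iden φh φ)) := Deriv.an (Ax.alpha halpha)
  -- T5 : (φ ≡ ψ) → (□(φh ≡ φ) → □(φh ≡ ψ))
  have T5 := T1.trans T2
  -- T6 : (φ ≡ ψ) → □(φh ≡ ψ)
  have T6 : Deriv E ∅ (imp (iden φ ψ) (box (iden φh ψ))) :=
    ((Deriv.ax (Ax.taut (taut_mp (box (iden φh φ)) (iden φ ψ) (box (iden φh ψ))))).mp T4).mp T5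
  -- T7 : □(φh ≡ ψ) → □(φ ≡ ψ)
  have halpha2 : AlphaEq (iden φh ψ) (iden φ ψ) := by
    show iden (subst var φh) (subst var ψ) = iden (subst var φ) (subst var ψ)
    rw [hφhn]
  have T7 : Deriv E ∅ (imp (box (iden φh ψ)) (box (iden φ ψ))) :=
    box_repl (Deriv.ax (Ax.alpha halpha2))
  exact T6.trans T7

end Fm

open Fm

/-- In S3⁼∀, S4⁼∀ and S5⁼∀, the formula (φ ≡ ψ) → □(φ ≡ ψ) is
derivable: propositional identity statements are necessary. -/
theorem iden_implies_box_iden :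
    (∀ φ ψ : Fm, Deriv E3 ∅ (imp (iden φ ψ) (box (iden φ ψ)))) ∧
    (∀ φ ψ : Fm, Deriv E4 ∅ (imp (iden φ ψ) (box (iden φ ψ)))) ∧
    (∀ φ ψ : Fm, Deriv E5 ∅ (imp (iden φ ψ) (box (iden φ ψ)))) := by
  exact ⟨main_thm E3, main_thm E4, main_thm E5⟩
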